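/- Let 1 < p < ∞, let E be a real Banach space, let (Ω,Σ,μ) be a measure space, and let T : E → L_p(μ) be a bounded linear operator. Then for every n ∈ ℕ and all x_1,…,x_n, y_1,…,y_n ∈ E, ‖⋁_{i=1}^n Tx_i − ⋁_{j=1}^n Ty_j‖_{L_p(μ)} ≤ ‖T‖ · ‖⋁_{i=1}^n δ_{x_i} − ⋁_{j=1}^n δ_{y_j}‖_p, where the suprema on the right-hand side are taken pointwise in H[E]. -/

import Mathlib

open scoped ENNReal

/-- A function `f : E* → ℝ` is positively homogeneous. -/
def PosHomog {E : Type*} [NormedAddCommGroup E] [NormedSpace ℝ E]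
    (f : (E →L[ℝ] ℝ) → ℝ) : Prop :=
  ∀ (c : ℝ), 0 ≤ c → ∀ φ : E →L[ℝ] ℝ, f (c • φ) = c * f φ

/-- The weak `q`-summing norm of a finite family in `E*`. -/
noncomputable def weakSumNorm {E : Type*} [NormedAddCommGroup E] [NormedSpace ℝ E]
    (q : ℝ) {n : ℕ} (xs : Fin n → (E →L[ℝ] ℝ)) : ℝ :=
  sSup ((fun x : E => (∑ k, |xs k x| ^ q) ^ (1 / q)) '' Metric.closedBall 0 1)

/-- The `(p,q)`-summing norm of `f : E* → ℝ`, with values in `[0,∞]`. -/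
noncomputable def pqNorm {E : Type*} [NormedAddCommGroup E] [NormedSpace ℝ E]
    (p q : ℝ) (f : (E →L[ℝ] ℝ) → ℝ) : ℝ≥0∞ :=
  ⨆ (n : ℕ) (xs : Fin n → (E →L[ℝ] ℝ)) (_ : weakSumNorm q xs ≤ 1),
    ENNReal.ofReal ((∑ k, |f (xs k)| ^ p) ^ (1 / p))

open MeasureTheory

private lemma coeFn_sup'_aux {Ω : Type*} [MeasurableSpace Ω] {μ : Measure Ω}
    {q : ℝ≥0∞} [Fact (1 ≤ q)] {ι : Type*} {s : Finset ι}
    (hs : s.Nonempty) (f : ι → Lp ℝ q μ) :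
    ⇑(s.sup' hs f) =ᵐ[μ] fun ω => s.sup' hs fun i => f i ω := by
  induction hs using Finset.Nonempty.cons_induction with
  | singleton a =>
    refine Filter.Eventually.of_forall fun ω => ?_
    simp
  | cons a s h hs ih =>
    filter_upwards [MeasureTheory.Lp.coeFn_sup (f a) (s.sup' hs f), ih] with ω h1 h2
    simp only [Finset.sup'_cons hs]
    rw [h1]
    simp only [Pi.sup_apply, h2]

private lemma argmax_partition {Ω : Type*} [MeasurableSpace Ω] {n : ℕ}
    (g : Fin (n + 1) → Ω → ℝ) (hg : ∀ i, Measurable (g i)) :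
    ∃ A : Fin (n + 1) → Set Ω, (∀ i, MeasurableSet (A i)) ∧
      Pairwise (Function.onFun Disjoint A) ∧ (⋃ i, A i) = Set.univ ∧
      (∀ i, ∀ ω ∈ A i, ∀ i', g i' ω ≤ g i ω) := by
  classical
  set G : Ω → ℝ :=
    fun ω => (Finset.univ : Finset (Fin (n + 1))).sup' ⟨0, Finset.mem_univ 0⟩ fun i => g i ω
    with hG
  have hGm : Measurable G := by
    have h := Finset.measurable_sup'
      (⟨0, Finset.mem_univ 0⟩ : (Finset.univ : Finset (Fin (n + 1))).Nonempty) (fun i _ => hg i)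
    have : (Finset.univ : Finset (Fin (n+1))).sup' ⟨0, Finset.mem_univ 0⟩ g = G := by
      funext ω; exact Finset.sup'_apply _ _ _
    rwa [this] at h
  refine ⟨fun i => {ω | g i ω = G ω ∧ ∀ i' < i, g i' ω ≠ G ω}, ?_, ?_, ?_, ?_⟩
  · intro i
    have h2 : ∀ i' : Fin (n+1), MeasurableSet {ω | g i' ω = G ω} := fun i' =>
      measurableSet_eq_fun (hg i') hGm
    show MeasurableSet {ω | g i ω = G ω ∧ ∀ i' < i, g i' ω ≠ G ω}
    have heq : {ω | g i ω = G ω ∧ ∀ i' < i, g i' ω ≠ G ω}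
        = {ω | g i ω = G ω} ∩ ⋂ i' ∈ {j | j < i}, {ω | g i' ω = G ω}ᶜ := by
      ext ω
      simp only [Set.mem_setOf_eq, Set.mem_inter_iff, Set.mem_iInter, Set.mem_compl_iff]
    rw [heq]
    exact (h2 i).inter (MeasurableSet.biInter (Set.to_countable _) fun i' _ => (h2 i').compl)
  · intro i i' hii
    rcases hii.lt_or_gt with hlt | hlt
    · rw [Function.onFun, Set.disjoint_left]
      intro ω h1 h2
      exact h2.2 i hlt h1.1
    · rw [Function.onFun, Set.disjoint_left]
      intro ω h1 h2
      exact h1.2 i' hlt h2.1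
  · ext ω
    simp only [Set.mem_iUnion, Set.mem_univ, iff_true]
    have hnefil : (Finset.univ.filter fun i => g i ω = G ω).Nonempty := by
      obtain ⟨i, _, hi⟩ := Finset.exists_mem_eq_sup'
        (⟨0, Finset.mem_univ 0⟩ : (Finset.univ : Finset (Fin (n + 1))).Nonempty)
        (fun i => g i ω)
      exact ⟨i, Finset.mem_filter.mpr ⟨Finset.mem_univ _, hi.symm⟩⟩
    refine ⟨(Finset.univ.filter fun i => g i ω = G ω).min' hnefil, ?_, ?_⟩
    · exact (Finset.mem_filter.mp (Finset.min'_mem _ hnefil)).2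
    · intro i' hi' hcon
      have : (Finset.univ.filter fun i => g i ω = G ω).min' hnefil ≤ i' :=
        Finset.min'_le (Finset.univ.filter fun i => g i ω = G ω) i'
          (Finset.mem_filter.mpr ⟨Finset.mem_univ _, hcon⟩)
      exact absurd hi' (not_lt.mpr this)
  · intro i ω hω i'
    calc g i' ω ≤ G ω := Finset.le_sup' (f := fun i => g i ω) (Finset.mem_univ i')
    _ = g i ω := hω.1.symm

private lemma sup'_mul_aux {α : Type*} {s : Finset α} (hs : s.Nonempty) (c : ℝ) (hc : 0 ≤ c)
    (v : α → ℝ) : s.sup' hs (fun i => c * v i) = c * s.sup' hs v := by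
  have h := Finset.comp_sup'_eq_sup'_comp (f := v) hs (fun t => c * t)
    (fun a b => by show c * max a b = max (c * a) (c * b); exact mul_max_of_nonneg a b hc)
  exact h.symm

/-- For `1 < p < ∞`, an operator `T : E → L_p(μ)` and
`x_1,…,x_n, y_1,…,y_n ∈ E`, one has
`‖⋁ᵢ Txᵢ − ⋁ⱼ Tyⱼ‖ ≤ ‖T‖ · ‖⋁ᵢ δ_{xᵢ} − ⋁ⱼ δ_{yⱼ}‖_p`. -/
theorem Lp_lattice_estimate_for_free_pConvex_norm
    (E : Type*) [NormedAddCommGroup E] [NormedSpace ℝ E] [CompleteSpace E]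
    (p : ℝ) (hp : 1 < p) [Fact (1 ≤ ENNReal.ofReal p)]
    {Ω : Type*} [MeasurableSpace Ω] (μ : Measure Ω)
    (T : E →L[ℝ] Lp ℝ (ENNReal.ofReal p) μ)
    (n : ℕ) (x y : Fin (n + 1) → E) :
    ENNReal.ofReal
        ‖((Finset.univ : Finset (Fin (n + 1))).sup' ⟨0, Finset.mem_univ 0⟩ fun i => T (x i)) -
          ((Finset.univ : Finset (Fin (n + 1))).sup' ⟨0, Finset.mem_univ 0⟩ fun j => T (y j))‖ ≤
      ENNReal.ofReal ‖T‖ *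
        pqNorm p p (fun φ : E →L[ℝ] ℝ =>
          ((Finset.univ : Finset (Fin (n + 1))).sup' ⟨0, Finset.mem_univ 0⟩ fun i => φ (x i)) -
          ((Finset.univ : Finset (Fin (n + 1))).sup' ⟨0, Finset.mem_univ 0⟩ fun j => φ (y j))) := by
  classical
  -- trivial case `T = 0`
  by_cases hT0 : ‖T‖ = 0
  · have hT : T = 0 := by rwa [norm_eq_zero] at hT0
    simp only [hT, ContinuousLinearMap.zero_apply, Finset.sup'_const, sub_self, norm_zero,
      ENNReal.ofReal_zero]
    exact zero_le
  have hTpos : (0 : ℝ) < ‖T‖ := lt_of_le_of_ne (norm_nonneg T) (Ne.symm hT0)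
  -- basic exponent facts
  have hp0 : (0 : ℝ) < p := lt_trans one_pos hp
  have hp0' : p ≠ 0 := ne_of_gt hp0
  have hpm1 : (0 : ℝ) < p - 1 := sub_pos.mpr hp
  set p' : ℝ := p / (p - 1) with hp'def
  have hpq : Real.HolderConjugate p p' := (Real.holderConjugate_iff_eq_conjExponent hp).mpr rfl
  have hp'0 : (0 : ℝ) < p' := hpq.symm.pos
  have hppinv : (p - 1) * p' = p := by rw [hp'def]; field_simp
  have hinvsub : 1 - 1 / p' = 1 / p := by
    have := hpq.inv_add_inv_eq_one
    rw [one_div, one_div]; linarith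
  set q : ℝ≥0∞ := ENNReal.ofReal p with hqdef
  have hq0 : q ≠ 0 := by
    rw [hqdef, Ne, ENNReal.ofReal_eq_zero, not_le]; exact hp0
  have hqt : q ≠ ∞ := ENNReal.ofReal_ne_top
  have hqr : q.toReal = p := ENNReal.toReal_ofReal hp0.le
  have hne : (Finset.univ : Finset (Fin (n + 1))).Nonempty := ⟨0, Finset.mem_univ 0⟩
  -- Lp norm formula
  have hLpnorm : ∀ f : Lp ℝ q μ, ‖f‖ = (∫ ω, |f ω| ^ p ∂μ) ^ (1 / p) := by
    intro f
    rw [Lp.norm_def, (Lp.memLp f).eLpNorm_eq_integral_rpow_norm hq0 hqt,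
      ENNReal.toReal_ofReal (Real.rpow_nonneg (integral_nonneg fun ω =>
        Real.rpow_nonneg (norm_nonneg _) _) _)]
    simp only [hqr, Real.norm_eq_abs, one_div]
  have hIntP : ∀ f : Lp ℝ q μ, Integrable (fun ω => |f ω| ^ p) μ := by
    intro f
    have := (Lp.memLp f).integrable_norm_rpow hq0 hqt
    simpa only [hqr, Real.norm_eq_abs] using this
  -- the two suprema and their difference
  set SX : Lp ℝ q μ :=
    (Finset.univ : Finset (Fin (n + 1))).sup' ⟨0, Finset.mem_univ 0⟩ (fun i => T (x i)) with hSX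
  set SY : Lp ℝ q μ :=
    (Finset.univ : Finset (Fin (n + 1))).sup' ⟨0, Finset.mem_univ 0⟩ (fun j => T (y j)) with hSY
  set F : (E →L[ℝ] ℝ) → ℝ := fun φ =>
    ((Finset.univ : Finset (Fin (n + 1))).sup' ⟨0, Finset.mem_univ 0⟩ fun i => φ (x i)) -
    ((Finset.univ : Finset (Fin (n + 1))).sup' ⟨0, Finset.mem_univ 0⟩ fun j => φ (y j)) with hF
  -- pointwise sup functions
  set G : Ω → ℝ := fun ω =>
    (Finset.univ : Finset (Fin (n + 1))).sup' ⟨0, Finset.mem_univ 0⟩ fun i => (T (x i)) ω with hG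
  set GY : Ω → ℝ := fun ω =>
    (Finset.univ : Finset (Fin (n + 1))).sup' ⟨0, Finset.mem_univ 0⟩ fun j => (T (y j)) ω with hGY
  set H : Ω → ℝ := fun ω => G ω - GY ω with hHdef
  have hgm : ∀ i, Measurable fun ω => (T (x i)) ω := fun i =>
    (Lp.stronglyMeasurable (T (x i))).measurable
  have hgym : ∀ j, Measurable fun ω => (T (y j)) ω := fun j =>
    (Lp.stronglyMeasurable (T (y j))).measurable
  have hGm : Measurable G := by
    have h := Finset.measurable_sup'
      (⟨0, Finset.mem_univ 0⟩ : (Finset.univ : Finset (Fin (n + 1))).Nonempty)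
      (fun i _ => hgm i)
    have e : (Finset.univ : Finset (Fin (n+1))).sup' ⟨0, Finset.mem_univ 0⟩
        (fun i => fun ω => (T (x i)) ω) = G := by
      funext ω; exact Finset.sup'_apply _ _ _
    rwa [e] at h
  have hGYm : Measurable GY := by
    have h := Finset.measurable_sup'
      (⟨0, Finset.mem_univ 0⟩ : (Finset.univ : Finset (Fin (n + 1))).Nonempty)
      (fun j _ => hgym j)
    have e : (Finset.univ : Finset (Fin (n+1))).sup' ⟨0, Finset.mem_univ 0⟩
        (fun j => fun ω => (T (y j)) ω) = GY := by
      funext ω; exact Finset.sup'_apply _ _ _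
    rwa [e] at h
  have hHm : Measurable H := hGm.sub hGYm
  have hH : ⇑(SX - SY) =ᵐ[μ] H := by
    have h2 : ⇑SX =ᵐ[μ] G :=
      coeFn_sup'_aux (⟨0, Finset.mem_univ 0⟩ :
        (Finset.univ : Finset (Fin (n + 1))).Nonempty) (fun i => T (x i))
    have h3 : ⇑SY =ᵐ[μ] GY :=
      coeFn_sup'_aux (⟨0, Finset.mem_univ 0⟩ :
        (Finset.univ : Finset (Fin (n + 1))).Nonempty) (fun j => T (y j))
    filter_upwards [Lp.coeFn_sub SX SY, h2, h3] with ω h1 h2 h3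
    rw [h1]
    simp only [Pi.sub_apply]
    rw [h2, h3]
  have hmemH : MemLp H q μ := (Lp.memLp (SX - SY)).ae_eq hH
  have hIntH : Integrable (fun ω => |H ω| ^ p) μ := by
    have := hmemH.integrable_norm_rpow hq0 hqt
    simpa only [hqr, Real.norm_eq_abs] using this
  have hnormD : ‖SX - SY‖ = (∫ ω, |H ω| ^ p ∂μ) ^ (1 / p) := by
    rw [hLpnorm (SX - SY)]
    congr 1
    apply integral_congr_ae
    filter_upwards [hH] with ω hω
    rw [hω]
  -- the weight
  set u : Ω → ℝ := fun ω => |H ω| ^ (p - 1) with hu_def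
  have hu0 : ∀ ω, 0 ≤ u ω := fun ω => Real.rpow_nonneg (abs_nonneg _) _
  have hu : MemLp u (ENNReal.ofReal p') μ := by
    have h2 := hmemH.norm_rpow_div (ENNReal.ofReal (p - 1))
    rw [ENNReal.toReal_ofReal hpm1.le] at h2
    have hqq : q / ENNReal.ofReal (p - 1) = ENNReal.ofReal p' := by
      rw [hqdef, hp'def, ENNReal.ofReal_div_of_pos hpm1]
    rw [hqq] at h2
    simpa only [Real.norm_eq_abs] using h2
  have hupp' : ∀ ω, ‖u ω‖ ^ p' = |H ω| ^ p := by
    intro ω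
    rw [Real.norm_eq_abs, abs_of_nonneg (hu0 ω), hu_def, ← Real.rpow_mul (abs_nonneg _), hppinv]
  -- integrability of products
  have hint_prod : ∀ f : Lp ℝ q μ, Integrable (fun ω => f ω * u ω) μ := by
    intro f
    have h3 : (1 : ℝ≥0∞) / 1 = 1 / ENNReal.ofReal p' + 1 / q := by
      rw [hqdef, one_div, one_div, one_div, ← ENNReal.ofReal_inv_of_pos hp'0,
        ← ENNReal.ofReal_inv_of_pos hp0, ← ENNReal.ofReal_add (by positivity) (by positivity),
        inv_one, show p'⁻¹ + p⁻¹ = 1 by rw [add_comm]; exact hpq.inv_add_inv_eq_one,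
        ENNReal.ofReal_one]
    haveI : ENNReal.HolderTriple (ENNReal.ofReal p') q 1 := ⟨by simpa [one_div] using h3.symm⟩
    have h4 := ((Lp.memLp f).smul hu : MemLp (u • ⇑f) 1 μ)
    rw [memLp_one_iff_integrable] at h4
    have h5 : Integrable (fun ω => u ω * f ω) μ := by
      exact h4
    simpa only [mul_comm] using h5
  -- Hölder's inequality on a set
  have hHolder : ∀ (f : Lp ℝ q μ) (S : Set Ω), MeasurableSet S →
      |∫ ω in S, f ω * u ω ∂μ| ≤
        (∫ ω in S, |f ω| ^ p ∂μ) ^ (1 / p) * (∫ ω in S, |H ω| ^ p ∂μ) ^ (1 / p') := by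
    intro f S hS
    have step1 : |∫ ω in S, f ω * u ω ∂μ| ≤ ∫ ω in S, ‖f ω‖ * ‖u ω‖ ∂μ := by
      rw [← Real.norm_eq_abs]
      refine (norm_integral_le_integral_norm _).trans ?_
      apply le_of_eq
      apply integral_congr_ae
      filter_upwards with ω
      rw [norm_mul]
    have step2 := integral_mul_norm_le_Lp_mul_Lq (μ := μ.restrict S) hpq
      ((Lp.memLp f).restrict S) (hu.restrict S)
    have e1 : ∫ ω in S, ‖f ω‖ ^ p ∂μ = ∫ ω in S, |f ω| ^ p ∂μ := by
      apply integral_congr_ae; filter_upwards with ω; rw [Real.norm_eq_abs]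
    have e2 : ∫ ω in S, ‖u ω‖ ^ p' ∂μ = ∫ ω in S, |H ω| ^ p ∂μ := by
      apply integral_congr_ae; filter_upwards with ω; rw [hupp']
    rw [e1, e2] at step2
    exact step1.trans step2
  -- argmax partitions
  obtain ⟨A, hAm, hAd, hAu, hAmax⟩ :=
    argmax_partition (fun i ω => (T (x i)) ω) hgm
  obtain ⟨C, hCm, hCd, hCu, hCmax⟩ :=
    argmax_partition (fun j ω => (T (y j)) ω) hgym
  -- sign sets
  set P : Bool → Set Ω := fun b => cond b {ω | 0 ≤ H ω} {ω | 0 ≤ H ω}ᶜ with hP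
  have hPmeas : MeasurableSet {ω | 0 ≤ H ω} := measurableSet_le measurable_const hHm
  have hPm : ∀ b, MeasurableSet (P b) := by
    intro b
    cases b
    · exact hPmeas.compl
    · exact hPmeas
  -- pieces
  set Epc : Fin (n + 1) × Fin (n + 1) × Bool → Set Ω :=
    fun k => (A k.1 ∩ C k.2.1) ∩ P k.2.2 with hEpc
  have hEm : ∀ k, MeasurableSet (Epc k) := fun k =>
    ((hAm k.1).inter (hCm k.2.1)).inter (hPm k.2.2)
  have hEd : Pairwise (Function.onFun Disjoint Epc) := by
    intro k k' hkk
    have hcases : k.1 ≠ k'.1 ∨ k.2.1 ≠ k'.2.1 ∨ k.2.2 ≠ k'.2.2 := by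
      by_contra hc
      push_neg at hc
      exact hkk (Prod.ext hc.1 (Prod.ext hc.2.1 hc.2.2))
    rcases hcases with hd | hd | hd
    · exact Disjoint.mono (fun ω hω => hω.1.1) (fun ω hω => hω.1.1) (hAd hd)
    · exact Disjoint.mono (fun ω hω => hω.1.2) (fun ω hω => hω.1.2) (hCd hd)
    · refine Disjoint.mono (fun ω hω => hω.2) (fun ω hω => hω.2) ?_
      rcases Bool.eq_false_or_eq_true k.2.2 with hb | hb <;>
        rcases Bool.eq_false_or_eq_true k'.2.2 with hb' | hb' <;>
        rw [hb, hb']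
      · exact absurd (hb.trans hb'.symm) hd
      · show Disjoint {ω | 0 ≤ H ω} ({ω | 0 ≤ H ω}ᶜ)
        exact disjoint_compl_right
      · show Disjoint ({ω | 0 ≤ H ω}ᶜ) {ω | 0 ≤ H ω}
        exact disjoint_compl_left
      · exact absurd (hb.trans hb'.symm) hd
  have hEu : (⋃ k, Epc k) = Set.univ := by
    ext ω
    simp only [Set.mem_iUnion, Set.mem_univ, iff_true]
    have h1 : ∃ i, ω ∈ A i := by
      have := hAu ▸ Set.mem_univ ω
      simpa only [Set.mem_iUnion] using (hAu.symm ▸ Set.mem_univ ω : ω ∈ ⋃ i, A i)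
    have h2 : ∃ j, ω ∈ C j := by
      simpa only [Set.mem_iUnion] using (hCu.symm ▸ Set.mem_univ ω : ω ∈ ⋃ j, C j)
    obtain ⟨i, hi⟩ := h1
    obtain ⟨j, hj⟩ := h2
    by_cases h0 : 0 ≤ H ω
    · exact ⟨(i, j, true), ⟨hi, hj⟩, h0⟩
    · exact ⟨(i, j, false), ⟨hi, hj⟩, h0⟩
  -- the masses
  set c : Fin (n + 1) × Fin (n + 1) × Bool → ℝ :=
    fun k => ∫ ω in Epc k, |H ω| ^ p ∂μ with hc
  have hc0 : ∀ k, 0 ≤ c k := fun k =>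
    integral_nonneg fun ω => Real.rpow_nonneg (abs_nonneg _) _
  have hcsum : ∑ k, c k = ∫ ω, |H ω| ^ p ∂μ := by
    have h := integral_iUnion_fintype hEm hEd (fun k => hIntH.integrableOn)
    rw [hEu, Measure.restrict_univ] at h
    exact h.symm
  -- construction of the functionals
  have key : ∀ k : Fin (n + 1) × Fin (n + 1) × Bool, ∃ φ : E →L[ℝ] ℝ,
      ∀ z : E, φ z = (c k ^ (1 / p'))⁻¹ * ∫ ω in Epc k, (T z) ω * u ω ∂μ := by
    intro k
    have hbound : ∀ z : E,
        ‖∫ ω in Epc k, (T z) ω * u ω ∂μ‖ ≤ (c k ^ (1 / p') * ‖T‖) * ‖z‖ := by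
      intro z
      rw [Real.norm_eq_abs]
      refine (hHolder (T z) _ (hEm k)).trans ?_
      have h5 : ∫ ω in Epc k, |(T z) ω| ^ p ∂μ ≤ ∫ ω, |(T z) ω| ^ p ∂μ :=
        setIntegral_le_integral (hIntP (T z))
          (Filter.Eventually.of_forall fun ω => Real.rpow_nonneg (abs_nonneg _) _)
      have h6 : (∫ ω in Epc k, |(T z) ω| ^ p ∂μ) ^ (1 / p) ≤ ‖T z‖ := by
        rw [hLpnorm (T z)]
        exact Real.rpow_le_rpow (integral_nonneg fun ω => Real.rpow_nonneg (abs_nonneg _) _)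
          h5 (by positivity)
      calc (∫ ω in Epc k, |(T z) ω| ^ p ∂μ) ^ (1 / p) * (c k) ^ (1 / p')
          ≤ ‖T z‖ * (c k) ^ (1 / p') :=
            mul_le_mul_of_nonneg_right h6 (Real.rpow_nonneg (hc0 k) _)
        _ ≤ (‖T‖ * ‖z‖) * (c k) ^ (1 / p') :=
            mul_le_mul_of_nonneg_right (T.le_opNorm z) (Real.rpow_nonneg (hc0 k) _)
        _ = (c k ^ (1 / p') * ‖T‖) * ‖z‖ := by ring
    refine ⟨(c k ^ (1 / p'))⁻¹ • LinearMap.mkContinuous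
      { toFun := fun z => ∫ ω in Epc k, (T z) ω * u ω ∂μ
        map_add' := ?_
        map_smul' := ?_ } (c k ^ (1 / p') * ‖T‖) hbound, fun z => ?_⟩
    · intro z z'
      show (∫ ω in Epc k, (T (z + z')) ω * u ω ∂μ)
          = (∫ ω in Epc k, (T z) ω * u ω ∂μ) + ∫ ω in Epc k, (T z') ω * u ω ∂μ
      have e : ⇑(T (z + z')) =ᵐ[μ] fun ω => (T z) ω + (T z') ω := by
        rw [map_add]; exact Lp.coeFn_add _ _
      have e1 : ∫ ω in Epc k, (T (z + z')) ω * u ω ∂μ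
          = ∫ ω in Epc k, ((T z) ω + (T z') ω) * u ω ∂μ := by
        apply integral_congr_ae
        filter_upwards [ae_restrict_of_ae e] with ω hω
        rw [hω]
      rw [e1]
      simp only [add_mul]
      exact integral_add ((hint_prod (T z)).integrableOn) ((hint_prod (T z')).integrableOn)
    · intro a z
      show (∫ ω in Epc k, (T (a • z)) ω * u ω ∂μ)
          = (RingHom.id ℝ) a • ∫ ω in Epc k, (T z) ω * u ω ∂μ
      have e : ⇑(T (a • z)) =ᵐ[μ] fun ω => a * (T z) ω := by
        rw [_root_.map_smul]
        filter_upwards [Lp.coeFn_smul a (T z)] with ω hω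
        rw [hω]; simp
      have e1 : ∫ ω in Epc k, (T (a • z)) ω * u ω ∂μ
          = ∫ ω in Epc k, a * ((T z) ω * u ω) ∂μ := by
        apply integral_congr_ae
        filter_upwards [ae_restrict_of_ae e] with ω hω
        rw [hω, mul_assoc]
      rw [e1, MeasureTheory.integral_const_mul]
      simp
    · simp only [ContinuousLinearMap.smul_apply, LinearMap.mkContinuous_apply,
        LinearMap.coe_mk, AddHom.coe_mk, smul_eq_mul]
  choose Φ hΦ using key
  -- pointwise bound on |Φ k z|
  have hΦle : ∀ k z, |Φ k z| ≤ (∫ ω in Epc k, |(T z) ω| ^ p ∂μ) ^ (1 / p) := by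
    intro k z
    rw [hΦ k z, abs_mul, abs_inv, abs_of_nonneg (Real.rpow_nonneg (hc0 k) _)]
    by_cases hck : c k = 0
    · have h0 : (c k : ℝ) ^ (1 / p') = 0 := by
        rw [hck]; exact Real.zero_rpow (by positivity)
      have hi0 : |∫ ω in Epc k, (T z) ω * u ω ∂μ| = 0 := by
        refine le_antisymm ?_ (abs_nonneg _)
        have := hHolder (T z) _ (hEm k)
        rw [show (∫ ω in Epc k, |H ω| ^ p ∂μ) = c k from rfl, h0, mul_zero] at this
        exact this
      rw [hi0, mul_zero]
      exact Real.rpow_nonneg (integral_nonneg fun ω => Real.rpow_nonneg (abs_nonneg _) _) _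
    · have hcpos : 0 < c k := lt_of_le_of_ne (hc0 k) (Ne.symm hck)
      have hrp : (0 : ℝ) < c k ^ (1 / p') := Real.rpow_pos_of_pos hcpos _
      have := hHolder (T z) _ (hEm k)
      rw [show (∫ ω in Epc k, |H ω| ^ p ∂μ) = c k from rfl] at this
      calc (c k ^ (1 / p'))⁻¹ * |∫ ω in Epc k, (T z) ω * u ω ∂μ|
          ≤ (c k ^ (1 / p'))⁻¹ *
            ((∫ ω in Epc k, |(T z) ω| ^ p ∂μ) ^ (1 / p) * c k ^ (1 / p')) :=
            mul_le_mul_of_nonneg_left this (inv_nonneg.mpr hrp.le)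
        _ = (∫ ω in Epc k, |(T z) ω| ^ p ∂μ) ^ (1 / p) := by
            rw [mul_comm ((∫ ω in Epc k, |(T z) ω| ^ p ∂μ) ^ (1 / p)) _, ← mul_assoc,
              inv_mul_cancel₀ (ne_of_gt hrp), one_mul]
  have hΦpow : ∀ k z, |Φ k z| ^ p ≤ ∫ ω in Epc k, |(T z) ω| ^ p ∂μ := by
    intro k z
    have h1 := Real.rpow_le_rpow (abs_nonneg _) (hΦle k z) hp0.le
    rwa [← Real.rpow_mul (integral_nonneg fun ω => Real.rpow_nonneg (abs_nonneg _) _),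
      one_div, inv_mul_cancel₀ hp0', Real.rpow_one] at h1
  -- summed bound
  have hsum : ∀ z : E, ‖z‖ ≤ 1 → ∑ k, |Φ k z| ^ p ≤ ‖T‖ ^ p := by
    intro z hz
    have h1 : ∑ k, |Φ k z| ^ p ≤ ∑ k, ∫ ω in Epc k, |(T z) ω| ^ p ∂μ :=
      Finset.sum_le_sum fun k _ => hΦpow k z
    have h2 : ∑ k, ∫ ω in Epc k, |(T z) ω| ^ p ∂μ = ∫ ω, |(T z) ω| ^ p ∂μ := by
      have h := integral_iUnion_fintype hEm hEd (fun k => (hIntP (T z)).integrableOn)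
      rw [hEu, Measure.restrict_univ] at h
      exact h.symm
    have h3 : ∫ ω, |(T z) ω| ^ p ∂μ = ‖T z‖ ^ p := by
      rw [hLpnorm (T z), ← Real.rpow_mul
        (integral_nonneg fun ω => Real.rpow_nonneg (abs_nonneg _) _), one_div,
        inv_mul_cancel₀ hp0', Real.rpow_one]
    have h4 : ‖T z‖ ^ p ≤ ‖T‖ ^ p := by
      apply Real.rpow_le_rpow (norm_nonneg _) _ hp0.le
      calc ‖T z‖ ≤ ‖T‖ * ‖z‖ := T.le_opNorm z
        _ ≤ ‖T‖ * 1 := mul_le_mul_of_nonneg_left hz (norm_nonneg T)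
        _ = ‖T‖ := mul_one _
    calc ∑ k, |Φ k z| ^ p ≤ ∫ ω, |(T z) ω| ^ p ∂μ := h1.trans (le_of_eq h2)
      _ = ‖T z‖ ^ p := h3
      _ ≤ ‖T‖ ^ p := h4
  -- |t| * |t|^(p-1) = |t|^p
  have habsmul : ∀ t : ℝ, |t| * |t| ^ (p - 1) = |t| ^ p := by
    intro t
    by_cases ht : t = 0
    · simp [ht, Real.zero_rpow hp0', Real.zero_rpow (ne_of_gt hpm1)]
    · have h := abs_pos.mpr ht
      nth_rewrite 1 [← Real.rpow_one |t|]
      rw [← Real.rpow_add h]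
      norm_num
  -- the values of F on the functionals
  have hval : ∀ k : Fin (n + 1) × Fin (n + 1) × Bool, |F (Φ k)| ^ p = c k := by
    intro k
    have hxmax : ∀ i', Φ k (x i') ≤ Φ k (x k.1) := by
      intro i'
      rw [hΦ k (x i'), hΦ k (x k.1)]
      apply mul_le_mul_of_nonneg_left _ (inv_nonneg.mpr (Real.rpow_nonneg (hc0 k) _))
      apply setIntegral_mono_on ((hint_prod (T (x i'))).integrableOn)
        ((hint_prod (T (x k.1))).integrableOn) (hEm k)
      intro ω hω
      exact mul_le_mul_of_nonneg_right (hAmax k.1 ω hω.1.1 i') (hu0 ω)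
    have hymax : ∀ j', Φ k (y j') ≤ Φ k (y k.2.1) := by
      intro j'
      rw [hΦ k (y j'), hΦ k (y k.2.1)]
      apply mul_le_mul_of_nonneg_left _ (inv_nonneg.mpr (Real.rpow_nonneg (hc0 k) _))
      apply setIntegral_mono_on ((hint_prod (T (y j'))).integrableOn)
        ((hint_prod (T (y k.2.1))).integrableOn) (hEm k)
      intro ω hω
      exact mul_le_mul_of_nonneg_right (hCmax k.2.1 ω hω.1.2 j') (hu0 ω)
    have hsupx : ((Finset.univ : Finset (Fin (n + 1))).sup' ⟨0, Finset.mem_univ 0⟩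
        fun i => (Φ k) (x i)) = Φ k (x k.1) :=
      le_antisymm (Finset.sup'_le _ _ fun i' _ => hxmax i')
        (Finset.le_sup' (f := fun i => (Φ k) (x i)) (Finset.mem_univ k.1))
    have hsupy : ((Finset.univ : Finset (Fin (n + 1))).sup' ⟨0, Finset.mem_univ 0⟩
        fun j => (Φ k) (y j)) = Φ k (y k.2.1) :=
      le_antisymm (Finset.sup'_le _ _ fun j' _ => hymax j')
        (Finset.le_sup' (f := fun j => (Φ k) (y j)) (Finset.mem_univ k.2.1))
    have hFval : F (Φ k) = (c k ^ (1 / p'))⁻¹ * ∫ ω in Epc k, H ω * u ω ∂μ := by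
      simp only [hF]
      rw [hsupx, hsupy, hΦ k (x k.1), hΦ k (y k.2.1), ← mul_sub]
      congr 1
      rw [← integral_sub ((hint_prod (T (x k.1))).integrableOn)
        ((hint_prod (T (y k.2.1))).integrableOn)]
      apply setIntegral_congr_fun (hEm k)
      intro ω hω
      have hgx : G ω = (T (x k.1)) ω :=
        le_antisymm (Finset.sup'_le _ _ fun i' _ => hAmax k.1 ω hω.1.1 i')
          (Finset.le_sup' (f := fun i => (T (x i)) ω) (Finset.mem_univ k.1))
      have hgy : GY ω = (T (y k.2.1)) ω :=
        le_antisymm (Finset.sup'_le _ _ fun j' _ => hCmax k.2.1 ω hω.1.2 j')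
          (Finset.le_sup' (f := fun j => (T (y j)) ω) (Finset.mem_univ k.2.1))
      show (T (x k.1)) ω * u ω - (T (y k.2.1)) ω * u ω = H ω * u ω
      rw [← sub_mul]
      have : H ω = (T (x k.1)) ω - (T (y k.2.1)) ω := by
        rw [hHdef]; simp only []; rw [hgx, hgy]
      rw [this]
    have hHu : ∫ ω in Epc k, H ω * u ω ∂μ = (if k.2.2 then (1 : ℝ) else -1) * c k := by
      have hpt : Set.EqOn (fun ω => H ω * u ω)
          (fun ω => (if k.2.2 then (1 : ℝ) else -1) * |H ω| ^ p) (Epc k) := by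
        intro ω hω
        have hsign : ω ∈ P k.2.2 := hω.2
        show H ω * u ω = (if k.2.2 then (1 : ℝ) else -1) * |H ω| ^ p
        rcases Bool.eq_false_or_eq_true k.2.2 with hb | hb
        · rw [hb] at hsign ⊢
          have h0 : 0 ≤ H ω := hsign
          simp only [if_true, one_mul]
          show H ω * |H ω| ^ (p - 1) = |H ω| ^ p
          have h2 := habsmul (H ω)
          nth_rewrite 1 [abs_of_nonneg h0] at h2
          exact h2
        · rw [hb] at hsign ⊢
          have hlt : H ω < 0 := not_le.mp hsign
          simp only [Bool.false_eq_true, if_false]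
          have hneg : H ω = -|H ω| := by rw [abs_of_neg hlt]; ring
          show H ω * |H ω| ^ (p - 1) = -1 * |H ω| ^ p
          have h2 := habsmul (H ω)
          nth_rewrite 1 [hneg]
          rw [neg_mul, h2, neg_one_mul]
      rw [setIntegral_congr_fun (hEm k) hpt, integral_const_mul]
    rw [hFval, hHu]
    have hcore : |(c k ^ (1 / p'))⁻¹ * c k| ^ p = c k := by
      rw [abs_mul, abs_inv, abs_of_nonneg (Real.rpow_nonneg (hc0 k) _), abs_of_nonneg (hc0 k)]
      by_cases hck : c k = 0
      · simp [hck, Real.zero_rpow hp0']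
      · have hcpos : 0 < c k := lt_of_le_of_ne (hc0 k) (Ne.symm hck)
        have e3 : (c k ^ (1 / p'))⁻¹ * c k = c k ^ (1 / p) := by
          rw [← Real.rpow_neg (hc0 k)]
          nth_rewrite 2 [← Real.rpow_one (c k)]
          rw [← Real.rpow_add hcpos, show -(1 / p') + 1 = 1 / p by linarith [hinvsub]]
        rw [e3, ← Real.rpow_mul (hc0 k), one_div, inv_mul_cancel₀ hp0', Real.rpow_one]
    rcases Bool.eq_false_or_eq_true k.2.2 with hb | hb <;> rw [hb]
    · simp only [if_true]
      rw [one_mul]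
      exact hcore
    · simp only [Bool.false_eq_true, if_false]
      rw [neg_one_mul, mul_neg, abs_neg]
      exact hcore
  -- assemble everything
  set N := Fintype.card (Fin (n + 1) × Fin (n + 1) × Bool) with hN
  set e : (Fin (n + 1) × Fin (n + 1) × Bool) ≃ Fin N := Fintype.equivFin _ with he
  set xs : Fin N → (E →L[ℝ] ℝ) := fun m => ‖T‖⁻¹ • Φ (e.symm m) with hxs
  have claim1 : weakSumNorm p xs ≤ 1 := by
    unfold weakSumNorm
    apply Real.sSup_le _ zero_le_one
    rintro v ⟨z, hz, rfl⟩
    have hz1 : ‖z‖ ≤ 1 := mem_closedBall_zero_iff.mp hz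
    refine Real.rpow_le_one
      (Finset.sum_nonneg fun m _ => Real.rpow_nonneg (abs_nonneg _) _) ?_ (by positivity)
    have eterm : ∀ k, |(‖T‖⁻¹ • Φ k) z| ^ p = ‖T‖⁻¹ ^ p * |Φ k z| ^ p := by
      intro k
      rw [ContinuousLinearMap.smul_apply, smul_eq_mul, abs_mul, abs_inv, abs_norm,
        Real.mul_rpow (by positivity) (abs_nonneg _)]
    calc ∑ m, |xs m z| ^ p = ∑ k, |(‖T‖⁻¹ • Φ k) z| ^ p := by
          simp only [hxs]
          exact Equiv.sum_comp e.symm (fun k => |(‖T‖⁻¹ • Φ k) z| ^ p)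
      _ = ‖T‖⁻¹ ^ p * ∑ k, |Φ k z| ^ p := by
          rw [Finset.sum_congr rfl fun k _ => eterm k, ← Finset.mul_sum]
      _ ≤ ‖T‖⁻¹ ^ p * ‖T‖ ^ p := mul_le_mul_of_nonneg_left (hsum z hz1) (by positivity)
      _ = 1 := by
          rw [← Real.mul_rpow (by positivity) (norm_nonneg T), inv_mul_cancel₀ hT0,
            Real.one_rpow]
  have hFscale : ∀ k, F (‖T‖⁻¹ • Φ k) = ‖T‖⁻¹ * F (Φ k) := by
    intro k
    simp only [hF, ContinuousLinearMap.smul_apply, smul_eq_mul]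
    have h1 := sup'_mul_aux (⟨0, Finset.mem_univ 0⟩ :
      (Finset.univ : Finset (Fin (n + 1))).Nonempty) ‖T‖⁻¹ (by positivity)
      (fun i => Φ k (x i))
    have h2 := sup'_mul_aux (⟨0, Finset.mem_univ 0⟩ :
      (Finset.univ : Finset (Fin (n + 1))).Nonempty) ‖T‖⁻¹ (by positivity)
      (fun j => Φ k (y j))
    rw [h1, h2, mul_sub]
  have claim2 : (∑ m, |F (xs m)| ^ p) ^ (1 / p) = ‖T‖⁻¹ * ‖SX - SY‖ := by
    have e2 : ∀ k, |F (‖T‖⁻¹ • Φ k)| ^ p = ‖T‖⁻¹ ^ p * c k := by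
      intro k
      rw [hFscale k, abs_mul, abs_inv, abs_norm,
        Real.mul_rpow (by positivity) (abs_nonneg _), hval k]
    have e1 : ∑ m, |F (xs m)| ^ p = ‖T‖⁻¹ ^ p * ∑ k, c k := by
      calc ∑ m, |F (xs m)| ^ p = ∑ k, |F (‖T‖⁻¹ • Φ k)| ^ p := by
            simp only [hxs]
            exact Equiv.sum_comp e.symm (fun k => |F (‖T‖⁻¹ • Φ k)| ^ p)
        _ = ∑ k, ‖T‖⁻¹ ^ p * c k := Finset.sum_congr rfl fun k _ => e2 k
        _ = ‖T‖⁻¹ ^ p * ∑ k, c k := by rw [Finset.mul_sum]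
    rw [e1, hcsum, Real.mul_rpow (Real.rpow_nonneg (inv_nonneg.mpr (norm_nonneg T)) p)
      (integral_nonneg fun ω => Real.rpow_nonneg (abs_nonneg _) _), hnormD]
    have einv : ((‖T‖⁻¹ : ℝ) ^ p) ^ (1 / p) = ‖T‖⁻¹ := by
      rw [one_div, Real.rpow_rpow_inv (inv_nonneg.mpr (norm_nonneg T)) hp0']
    rw [einv]
  calc ENNReal.ofReal ‖SX - SY‖
      = ENNReal.ofReal (‖T‖ * (‖T‖⁻¹ * ‖SX - SY‖)) := by
        rw [← mul_assoc, mul_inv_cancel₀ hT0, one_mul]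
    _ = ENNReal.ofReal ‖T‖ * ENNReal.ofReal (‖T‖⁻¹ * ‖SX - SY‖) :=
        ENNReal.ofReal_mul (norm_nonneg T)
    _ ≤ ENNReal.ofReal ‖T‖ * pqNorm p p F := by
        apply mul_le_mul_right
        rw [← claim2]
        unfold pqNorm
        exact le_iSup_of_le N (le_iSup_of_le xs (le_iSup_of_le claim1 le_rfl))
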